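/- For 0 < δ < 1 and real N with N ≥ 2/(1 - e^{-2δ}), we have 1 - (1 - (1-δ)/N)^N ≤ 1 - e^{δ-1} * (1 + e^{-2δ})/2. -/

import Mathlib

theorem stmt_8 (δ : ℝ) (hδ0 : 0 < δ) (hδ1 : δ < 1) (N : ℝ)
    (hN : N ≥ 2 / (1 - Real.exp (-2 * δ))) :
    1 - (1 - (1 - δ) / N) ^ N ≤ 1 - Real.exp (δ - 1) * (1 + Real.exp (-2 * δ)) / 2 := by
  have hE : Real.exp (-2 * δ) < 1 := by
    rw [Real.exp_lt_one_iff]; nlinarith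
  have hEpos := Real.exp_pos (-2 * δ)
  have hE0 : 0 < 1 - Real.exp (-2 * δ) := by linarith
  have hN2 : (2:ℝ) ≤ N := le_trans (by rw [le_div_iff₀ hE0]; nlinarith) hN
  have hN0 : (0:ℝ) < N := by linarith
  set c : ℝ := 1 - δ with hc
  have hc0 : 0 < c := by simp [hc]; linarith
  have hc1 : c < 1 := by simp [hc]; linarith
  have hinv : 1 / N ≤ (1 - Real.exp (-2 * δ)) / 2 := by
    rw [div_le_div_iff₀ hN0 two_pos]
    have := (div_le_iff₀ hE0).mp hN
    nlinarith
  -- base positivity facts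
  have hcN : c / N < 1 := by
    rw [div_lt_one hN0]; linarith
  have hbase : 0 < 1 - c / N := by linarith
  have hsq : 0 ≤ 1 - c ^ 2 / N ^ 2 := by
    have : c ^ 2 / N ^ 2 < 1 := by
      rw [div_lt_one (by positivity)]; nlinarith
    linarith
  -- Bernoulli: (1 - c²/N²)^N ≥ 1 - c²/N
  have key1 : 1 - c ^ 2 / N ≤ (1 - c ^ 2 / N ^ 2) ^ N := by
    have h := one_add_mul_self_le_rpow_one_add (s := -(c ^ 2 / N ^ 2))
      (by nlinarith) (p := N) (by linarith)
    have e1 : 1 + N * -(c ^ 2 / N ^ 2) = 1 - c ^ 2 / N := by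
      field_simp; ring
    rw [e1] at h
    simpa [sub_eq_add_neg] using h
  -- (1 + c/N)^N ≤ exp c
  have key2 : (1 + c / N) ^ N ≤ Real.exp c := by
    have h1 : 1 + c / N ≤ Real.exp (c / N) := Real.add_one_le_exp _ |>.trans_eq (by ring) |> fun h => by linarith [Real.add_one_le_exp (c / N)]
    have h2 : (1 + c / N) ^ N ≤ Real.exp (c / N) ^ N :=
      Real.rpow_le_rpow (by positivity) h1 (le_of_lt hN0)
    have h3 : Real.exp (c / N) ^ N = Real.exp c := by
      rw [← Real.exp_mul]
      congr 1
      field_simp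
    linarith [h2, h3 ▸ h2]
  -- factorization
  have key3 : (1 - c / N) ^ N = (1 - c ^ 2 / N ^ 2) ^ N / (1 + c / N) ^ N := by
    rw [← Real.div_rpow hsq (by positivity)]
    congr 1
    field_simp
    ring
  have hplus : 0 < (1 + c / N) ^ N := Real.rpow_pos_of_pos (by positivity) _
  have key4 : (1 - c ^ 2 / N) / Real.exp c ≤ (1 - c / N) ^ N := by
    rw [key3]
    exact div_le_div₀ (Real.rpow_nonneg hsq N) key1 hplus key2
  -- final numeric step
  have hcsq : c ^ 2 / N ≤ (1 - Real.exp (-2 * δ)) / 2 := by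
    have h1 : c ^ 2 / N ≤ 1 / N := by
      apply div_le_div_of_nonneg_right ?_ hN0.le |>.trans_eq rfl
      · nlinarith
    linarith
  have hfin : Real.exp (δ - 1) * (1 + Real.exp (-2 * δ)) / 2 ≤ (1 - c ^ 2 / N) / Real.exp c := by
    have hexp : Real.exp (δ - 1) = 1 / Real.exp c := by
      rw [hc, one_div, ← Real.exp_neg]; congr 1; ring
    rw [hexp]
    rw [div_le_div_iff₀ two_pos (Real.exp_pos c)]
    have : (1 + Real.exp (-2 * δ)) / 2 ≤ 1 - c ^ 2 / N := by linarith
    have hec := Real.exp_pos c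
    calc 1 / Real.exp c * (1 + Real.exp (-2 * δ)) * Real.exp c
        = (1 + Real.exp (-2 * δ)) := by field_simp
      _ ≤ (1 - c ^ 2 / N) * 2 := by linarith
  linarith [hfin.trans key4]
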